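/- Every Lyndon word y with |y| > 1 can be written as y = x^k z b, where x is a Lyndon word whose length equals the period of x^k z, k ≥ 1, z is a proper prefix of x, and b is a letter strictly greater than the letter a that follows z in x (i.e., za is a prefix of x and a < b). -/

import Mathlib

variable {α : Type*} [LinearOrder α] [Inhabited α]

/-- A Lyndon word: a non-empty word strictly lexicographically smaller than
all its proper non-empty suffixes. -/
def IsLyndon (w : List α) : Prop :=
  w ≠ [] ∧ ∀ v : List α, v ≠ [] → v ≠ w → v <:+ w → List.Lex (· < ·) w v

/-- `wpow x k` is the word `x` repeated `k` times. -/
def wpow (x : List α) (k : ℕ) : List α := (List.replicate k x).flatten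

/-- `infWord x` is the infinite word `x^∞` (junk value if `x = []`). -/
def infWord (x : List α) : ℕ → α := fun i => x.getD (i % x.length) default

/-- Strict lexicographic order on infinite words. -/
def InfLt (f g : ℕ → α) : Prop := ∃ n, (∀ i < n, f i = g i) ∧ f n < g n

/-- The infinite ordering `≺` on non-empty words. -/
def Prec (u v : List α) : Prop :=
  InfLt (infWord u) (infWord v) ∨ (infWord u = infWord v ∧ v.length < u.length)

/-- `u` is strongly less than `v`: they share a common prefix followed by
strictly comparable letters. -/
def StrongLt (u v : List α) : Prop :=
  ∃ (p s t : List α) (a b : α), a < b ∧ u = p ++ a :: s ∧ v = p ++ b :: t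


/-- A word `w` has period `p` if `0 < p` and letters at distance `p` agree. -/
def IsPeriod (w : List α) (p : ℕ) : Prop :=
  0 < p ∧ ∀ i : ℕ, i + p < w.length → w.getD i default = w.getD (i + p) default

set_option linter.unusedSectionVars false
set_option linter.unusedVariables false

namespace Duval

lemma length_wpow (x : List α) (k : ℕ) : (wpow x k).length = k * x.length := by
  induction k with
  | zero => simp [wpow]
  | succ n ih =>
    simp only [wpow, List.replicate_succ, List.flatten_cons, List.length_append]
    rw [show (List.replicate n x).flatten = wpow x n from rfl, ih]
    ring

lemma wpow_succ (x : List α) (k : ℕ) : wpow x (k+1) = x ++ wpow x k := by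
  simp [wpow, List.replicate_succ]

lemma wpow_succ' (x : List α) (k : ℕ) : wpow x (k+1) = wpow x k ++ x := by
  simp [wpow, List.replicate_succ']

lemma getD_drop' (l : List α) (m t : ℕ) :
    (l.drop m).getD t default = l.getD (m + t) default := by
  rcases lt_or_ge (m + t) l.length with h | h
  · have ht : t < (l.drop m).length := by simp [List.length_drop]; omega
    rw [List.getD_eq_getElem _ _ ht, List.getD_eq_getElem _ _ h, List.getElem_drop]
  · rw [List.getD_eq_default _ _ (by simp [List.length_drop]; omega),
        List.getD_eq_default _ _ h]

lemma prefix_getD {z x : List α} (h : z <+: x) {m : ℕ} (hm : m < z.length) :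
    z.getD m default = x.getD m default := by
  obtain ⟨t, rfl⟩ := h
  rw [List.getD_append _ _ _ _ hm]

lemma getD_cons_succ' (a : α) (l : List α) (n : ℕ) :
    (a :: l).getD (n+1) default = l.getD n default := rfl

lemma lex_of_getD {d : ℕ} : ∀ {u v : List α}, d < u.length → d < v.length →
    (∀ t < d, u.getD t default = v.getD t default) →
    u.getD d default < v.getD d default → List.Lex (· < ·) u v := by
  induction d with
  | zero =>
    rintro (_ | ⟨a, u⟩) (_ | ⟨b, v⟩) hu hv _ hlt
    · simp at hu
    · simp at hu
    · simp at hv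
    · exact List.Lex.rel (by simpa using hlt)
  | succ d ih =>
    rintro (_ | ⟨a, u⟩) (_ | ⟨b, v⟩) hu hv hag hlt
    · simp at hu
    · simp at hu
    · simp at hv
    · have h0 := hag 0 (by omega)
      simp only [List.getD_cons_zero] at h0
      subst h0
      refine List.Lex.cons (ih (by simpa using hu) (by simpa using hv)
        (fun t ht => ?_) (by simpa [getD_cons_succ'] using hlt))
      have := hag (t+1) (by omega)
      simpa [getD_cons_succ'] using this

lemma lex_mismatch : ∀ {u v : List α}, List.Lex (· < ·) u v →
    u <+: v ∨ ∃ d, d < u.length ∧ d < v.length ∧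
      (∀ t < d, u.getD t default = v.getD t default) ∧
      u.getD d default < v.getD d default := by
  intro u v h
  induction h with
  | nil => exact Or.inl (List.nil_prefix)
  | @rel a l b l' hab => exact Or.inr ⟨0, by simp, by simp, by simp, by simpa using hab⟩
  | @cons a l l' h ih =>
    rcases ih with hp | ⟨d, h1, h2, h3, h4⟩
    · exact Or.inl (by simpa using hp)
    · refine Or.inr ⟨d+1, by simpa using h1, by simpa using h2, ?_,
        by simpa [getD_cons_succ'] using h4⟩
      rintro (_ | t) ht
      · simp
      · simpa [getD_cons_succ'] using h3 t (by omega)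

lemma not_lex_of_prefix : ∀ {u v : List α}, v <+: u → ¬ List.Lex (· < ·) u v := by
  intro u v hp
  obtain ⟨t, ht⟩ := hp
  subst ht
  induction v with
  | nil => intro h; cases h
  | cons a v ih =>
    intro h
    cases h with
    | rel h => exact absurd h (lt_irrefl a)
    | cons h => exact ih h

lemma lex_asymm : ∀ {u v : List α}, List.Lex (· < ·) u v → ¬ List.Lex (· < ·) v u := by
  intro u v h
  induction h with
  | nil => intro h; cases h
  | rel h => intro h'; cases h' with
    | rel h' => exact absurd h' (not_lt_of_gt h)
    | cons _ => exact absurd h (lt_irrefl _)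
  | cons _ ih => intro h'; cases h' with
    | rel h' => exact absurd h' (lt_irrefl _)
    | cons h' => exact ih h'

lemma suffix_eq_drop {v u : List α} (h : v <:+ u) : ∃ m, m ≤ u.length ∧ v = u.drop m := by
  obtain ⟨t, ht⟩ := h
  subst ht
  exact ⟨t.length, by simp, by rw [List.drop_left]⟩

lemma prefix_snoc {z x : List α} (h : z <+: x) (hl : z.length < x.length) :
    z ++ [x.getD z.length default] <+: x := by
  obtain ⟨t, rfl⟩ := h
  have ht : t ≠ [] := by rintro rfl; simp at hl
  obtain ⟨b, t', rfl⟩ := List.exists_cons_of_ne_nil ht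
  have hb : (z ++ b :: t').getD z.length default = b := by
    rw [List.getD_append_right _ _ _ _ (le_refl _), Nat.sub_self]
    rfl
  rw [hb]
  exact ⟨t', by simp⟩

lemma lyndon_no_small_period {y : List α} (hy : IsLyndon y) {q : ℕ}
    (hq : IsPeriod y q) (hql : q < y.length) : False := by
  obtain ⟨hq0, hper⟩ := hq
  have hdt : y.drop q = y.take (y.length - q) := by
    apply List.ext_getElem (by simp [List.length_drop])
    intro n h1 h2
    have hn : n + q < y.length := by simp [List.length_drop] at h1; omega
    have heq := hper n hn
    rw [List.getD_eq_getElem _ _ (by omega : n < y.length),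
        List.getD_eq_getElem _ _ hn] at heq
    simp only [List.getElem_drop, List.getElem_take]
    have h3 : y[q+n]'(by omega) = y[n+q]'hn := by congr 1; omega
    rw [h3]
    exact heq.symm
  have hpre : y.drop q <+: y := hdt ▸ List.take_prefix _ _
  have hne : y.drop q ≠ y := by
    intro h
    have := congrArg List.length h
    simp [List.length_drop] at this
    omega
  have hnn : y.drop q ≠ [] := by
    intro h
    have := congrArg List.length h
    simp [List.length_drop] at this
    omega
  exact not_lex_of_prefix hpre (hy.2 _ hnn hne (List.drop_suffix _ _))

end Duval

namespace Duval

lemma getD_wz {x z : List α} (hz : z <+: x) (hp : 0 < x.length) (k : ℕ) :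
    ∀ m, m < k * x.length + z.length →
    (wpow x k ++ z).getD m default = x.getD (m % x.length) default := by
  induction k with
  | zero =>
    intro m hm
    simp only [Nat.zero_mul, Nat.zero_add] at hm
    have hm' : m < x.length := lt_of_lt_of_le hm hz.length_le
    rw [Nat.mod_eq_of_lt hm']
    simp only [wpow, List.replicate_zero, List.flatten_nil, List.nil_append]
    exact prefix_getD hz hm
  | succ k ih =>
    intro m hm
    rw [wpow_succ, List.append_assoc]
    rcases lt_or_ge m x.length with h | h
    · rw [List.getD_append _ _ _ _ h, Nat.mod_eq_of_lt h]
    · rw [List.getD_append_right _ _ _ _ h]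
      have hkp : (k+1) * x.length = k * x.length + x.length := by ring
      rw [ih (m - x.length) (by omega)]
      congr 1
      conv_rhs => rw [show m = x.length + (m - x.length) by omega]
      rw [Nat.add_mod_left]

lemma length_w (x z : List α) (k : ℕ) :
    (wpow x k ++ z).length = k * x.length + z.length := by
  simp [length_wpow]

lemma lyndon_ne_nil {x : List α} (hx : IsLyndon x) : 0 < x.length :=
  List.length_pos_iff.2 hx.1

lemma lyndon_mismatch {x : List α} (hx : IsLyndon x) {r : ℕ} (hr0 : 0 < r)
    (hrp : r < x.length) :
    ∃ e, e + r < x.length ∧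
      (∀ t < e, x.getD t default = x.getD (t + r) default) ∧
      x.getD e default < x.getD (e + r) default := by
  have hnn : x.drop r ≠ [] := by
    intro h
    have := congrArg List.length h
    simp [List.length_drop] at this
    omega
  have hne : x.drop r ≠ x := by
    intro h
    have := congrArg List.length h
    simp [List.length_drop] at this
    omega
  have hlex := hx.2 _ hnn hne (List.drop_suffix _ _)
  rcases lex_mismatch hlex with hp | ⟨d, h1, h2, h3, h4⟩
  · exact absurd hp.length_le (by simp [List.length_drop]; omega)
  · refine ⟨d, by simp [List.length_drop] at h2; omega, ?_, ?_⟩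
    · intro t ht
      have := h3 t ht
      rwa [getD_drop', show r + t = t + r from Nat.add_comm r t] at this
    · rwa [getD_drop', show r + d = d + r from Nat.add_comm r d] at h4

lemma lyndon_ext {x z : List α} {k : ℕ} {c : α} (hx : IsLyndon x)
    (hz : z <+: x) (hzl0 : z.length < x.length)
    (hac : x.getD z.length default < c) (hk : 1 ≤ k) :
    IsLyndon (wpow x k ++ z ++ [c]) := by
  obtain ⟨p, hpdef⟩ : ∃ p, p = x.length := ⟨_, rfl⟩
  have hp : 0 < p := hpdef ▸ lyndon_ne_nil hx
  have hzl : z.length < p := hpdef ▸ hzl0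
  obtain ⟨L, hL⟩ : ∃ L, L = k * p + z.length := ⟨_, rfl⟩
  have hwlen : (wpow x k ++ z).length = L := by
    rw [length_w, hL, hpdef]
  have hulen : (wpow x k ++ z ++ [c]).length = L + 1 := by
    rw [List.length_append, hwlen]
    rfl
  have hu_lt : ∀ m < L, (wpow x k ++ z ++ [c]).getD m default
      = x.getD (m % p) default := by
    intro m hm
    rw [List.getD_append _ _ _ _ (by omega : m < (wpow x k ++ z).length), hpdef]
    exact getD_wz hz (hpdef ▸ hp) k m (by rw [← hpdef, ← hL]; exact hm)
  have hu_L : (wpow x k ++ z ++ [c]).getD L default = c := by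
    rw [List.getD_append_right _ _ _ _ (le_of_eq hwlen), hwlen, Nat.sub_self]
    rfl
  have hpL : p ≤ L := by
    have : 1 * p ≤ k * p := Nat.mul_le_mul_right p hk
    omega
  constructor
  · simp
  intro v hv0 hvu hsuf
  obtain ⟨m, hmle, rfl⟩ := suffix_eq_drop hsuf
  have hm0 : 0 < m := by
    rcases Nat.eq_zero_or_pos m with rfl | h
    · simp at hvu
    · exact h
  have hmL : m ≤ L := by
    by_contra h
    push_neg at h
    apply hv0
    rw [List.drop_eq_nil_iff]
    omega
  have hvget : ∀ t, ((wpow x k ++ z ++ [c]).drop m).getD t default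
      = (wpow x k ++ z ++ [c]).getD (m + t) default := fun t => getD_drop' _ m t
  have hvlen : ((wpow x k ++ z ++ [c]).drop m).length = L + 1 - m := by
    rw [List.length_drop, hulen]
  obtain ⟨q, hqdef⟩ : ∃ q, q = m / p := ⟨_, rfl⟩
  obtain ⟨r, hrdef⟩ : ∃ r, r = m % p := ⟨_, rfl⟩
  have hqr : p * q + r = m := by rw [hqdef, hrdef]; exact Nat.div_add_mod m p
  have hrp : r < p := by rw [hrdef]; exact Nat.mod_lt _ hp
  have hqk : q ≤ k := by
    by_contra h
    push_neg at h
    have h1 : p * (k + 1) ≤ p * q := Nat.mul_le_mul_left p h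
    have h2 : p * (k + 1) = k * p + p := by ring
    omega
  have hmodsmall : ∀ t, r + t < p → (m + t) % p = r + t := by
    intro t htr
    rw [show m + t = p * q + (r + t) by omega, Nat.mul_add_mod,
      Nat.mod_eq_of_lt htr]
  rcases Nat.eq_zero_or_pos r with hr0 | hr0
  · -- m is a multiple of p
    have hdmod : (L - m) % p = z.length := by
      have hmul : p * q + p * (k - q) = p * k := by
        rw [← Nat.mul_add, Nat.add_sub_cancel' hqk]
      have hpk : p * k = k * p := Nat.mul_comm p k
      rw [show L - m = p * (k - q) + z.length by omega, Nat.mul_add_mod,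
        Nat.mod_eq_of_lt hzl]
    apply lex_of_getD (d := L - m) (by omega) (by omega)
    · intro t ht
      rw [hvget t, hu_lt t (by omega), hu_lt (m+t) (by omega)]
      congr 1
      rw [show m + t = p * q + t by omega, Nat.mul_add_mod]
    · rw [hvget (L - m), show m + (L - m) = L by omega, hu_L,
        hu_lt (L - m) (by omega), hdmod]
      exact hac
  · -- r > 0 : use the Lyndon mismatch of x against its suffix drop r
    obtain ⟨e, he0, hagx, hltx⟩ := lyndon_mismatch hx hr0 (by omega)
    have he : e + r < p := by omega
    rcases lt_or_ge (m + e) L with hme | hme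
    · -- mismatch happens inside the periodic part
      apply lex_of_getD (d := e) (by omega) (by omega)
      · intro t ht
        rw [hvget t, hu_lt t (by omega), hu_lt (m+t) (by omega),
          Nat.mod_eq_of_lt (show t < p by omega), hmodsmall t (by omega),
          show r + t = t + r from Nat.add_comm r t]
        exact hagx t ht
      · rw [hvget e, hu_lt e (by omega), hu_lt (m+e) (by omega),
          Nat.mod_eq_of_lt (show e < p by omega), hmodsmall e (by omega),
          show r + e = e + r from Nat.add_comm r e]
        exact hltx
    · -- mismatch would happen at or beyond the final letter c
      have hde : L - m ≤ e := by omega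
      have hqk' : q = k := by
        by_contra h
        have hq2 : q + 1 ≤ k := by
          rcases lt_or_ge q k with h' | h'
          · omega
          · omega
        have h1 : p * (q + 1) ≤ p * k := Nat.mul_le_mul_left p hq2
        have h2 : p * (q + 1) = p * q + p := by ring
        have hpk : p * k = k * p := Nat.mul_comm p k
        omega
      have hm_eq : p * k + r = m := by rw [← hqk']; exact hqr
      have hrd : r + (L - m) = z.length := by
        have hpk : p * k = k * p := Nat.mul_comm p k
        omega
      apply lex_of_getD (d := L - m) (by omega) (by omega)
      · intro t ht
        rw [hvget t, hu_lt t (by omega), hu_lt (m+t) (by omega),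
          Nat.mod_eq_of_lt (show t < p by omega), hmodsmall t (by omega),
          show r + t = t + r from Nat.add_comm r t]
        exact hagx t (by omega)
      · rw [hvget (L - m), show m + (L - m) = L by omega, hu_L,
          hu_lt (L - m) (by omega), Nat.mod_eq_of_lt (show L - m < p by omega)]
        rcases eq_or_lt_of_le hde with heq | hlt2
        · calc x.getD (L - m) default < x.getD (L - m + r) default := by
                rw [heq]; exact hltx
            _ = x.getD z.length default := by rw [show L - m + r = z.length by omega]
            _ < c := hac
        · calc x.getD (L - m) default = x.getD (L - m + r) default :=
                hagx (L - m) hlt2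
            _ = x.getD z.length default := by rw [show L - m + r = z.length by omega]
            _ < c := hac


lemma getD_take' {y : List α} {i n : ℕ} (h : i < n) :
    (y.take n).getD i default = y.getD i default := by
  rcases lt_or_ge i y.length with h2 | h2
  · have hi : i < (y.take n).length := by simp [List.length_take]; omega
    rw [List.getD_eq_getElem _ _ hi, List.getD_eq_getElem _ _ h2]
    simp [List.getElem_take]
  · rw [List.getD_eq_default _ _ (by simp [List.length_take]; omega),
      List.getD_eq_default _ _ h2]

lemma take_snoc {y : List α} {n : ℕ} (h : n < y.length) :
    y.take (n+1) = y.take n ++ [y.getD n default] := by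
  rw [List.take_succ, List.getElem?_eq_getElem h, List.getD_eq_getElem _ _ h]
  rfl

lemma period_take {w : List α} {q s : ℕ} (h : IsPeriod w q) : IsPeriod (w.take s) q := by
  refine ⟨h.1, fun i hi => ?_⟩
  have hl : (w.take s).length = min s w.length := List.length_take
  have h1 : i + q < s := by omega
  have h2 : i + q < w.length := by omega
  rw [getD_take' (by omega : i < s), getD_take' h1]
  exact h.2 i h2

lemma y_vals {y x z : List α} {k n : ℕ} (hz : z <+: x) (hx0 : 0 < x.length)
    (hn : n ≤ y.length) (hw : y.take n = wpow x k ++ z) :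
    n = k * x.length + z.length ∧
    ∀ i < n, y.getD i default = x.getD (i % x.length) default := by
  have hlen : n = k * x.length + z.length := by
    have := congrArg List.length hw
    rw [List.length_take, length_w] at this
    omega
  refine ⟨hlen, fun i hi => ?_⟩
  rw [← getD_take' hi, hw]
  exact getD_wz hz hx0 k i (by omega)

lemma suffix_contra {y x z : List α} {k n : ℕ} (hy : IsLyndon y) (hz : z <+: x)
    (hx0 : 0 < x.length) (hk : 1 ≤ k) (hzl : z.length < x.length)
    (hn : n < y.length) (hw : y.take n = wpow x k ++ z)
    (hc : y.getD n default < x.getD z.length default) : False := by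
  obtain ⟨hneq, hvals⟩ := y_vals hz hx0 (le_of_lt hn) hw
  have hkp : x.length ≤ k * x.length := by
    have := Nat.mul_le_mul_right x.length hk
    omega
  have hslen : (y.drop (k * x.length)).length = y.length - k * x.length := by
    simp [List.length_drop]
  have hlexsy : List.Lex (· < ·) (y.drop (k * x.length)) y := by
    apply lex_of_getD (d := z.length) (by omega) (by omega)
    · intro t ht
      rw [getD_drop', hvals (k * x.length + t) (by omega), hvals t (by omega)]
      congr 1
      rw [show k * x.length + t = x.length * k + t by ring, Nat.mul_add_mod]
    · rw [getD_drop', show k * x.length + z.length = n by omega,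
        hvals z.length (by omega), Nat.mod_eq_of_lt hzl]
      exact hc
  have hnn : y.drop (k * x.length) ≠ [] := by
    intro h
    have := congrArg List.length h
    simp [List.length_drop] at this
    omega
  have hne : y.drop (k * x.length) ≠ y := by
    intro h
    have := congrArg List.length h
    simp [List.length_drop] at this
    omega
  exact lex_asymm (hy.2 _ hnn hne (List.drop_suffix _ _)) hlexsy

lemma period_extend {y x z : List α} {k n : ℕ} (hz : z <+: x)
    (hx0 : 0 < x.length) (hk : 1 ≤ k) (hzl : z.length < x.length)
    (hn : n < y.length) (hw : y.take n = wpow x k ++ z)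
    (hc : y.getD n default = x.getD z.length default) :
    IsPeriod (y.take (n+1)) x.length := by
  obtain ⟨hneq, hvals⟩ := y_vals hz hx0 (le_of_lt hn) hw
  have hkp : x.length ≤ k * x.length := by
    have := Nat.mul_le_mul_right x.length hk
    omega
  refine ⟨hx0, fun i hi => ?_⟩
  have hl : (y.take (n+1)).length = n + 1 := by
    rw [List.length_take]; omega
  rw [hl] at hi
  rw [getD_take' (by omega : i < n+1), getD_take' (by omega : i + x.length < n+1)]
  rcases lt_or_ge (i + x.length) n with h | h
  · rw [hvals i (by omega), hvals (i + x.length) (by omega), Nat.add_mod_right]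
  · have hieq : i + x.length = n := by omega
    have h5 : x.length * (k-1) + x.length = x.length * k := by
      rw [← Nat.mul_succ]
      congr 1
      omega
    have hieq2 : i = x.length * (k-1) + z.length := by
      have hpk : x.length * k = k * x.length := Nat.mul_comm _ _
      omega
    rw [hieq, hc, hvals i (by omega), hieq2, Nat.mul_add_mod, Nat.mod_eq_of_lt hzl]

lemma prefix_decomp {y : List α} (hy : IsLyndon y) :
    ∀ n, 1 ≤ n → n < y.length →
    ∃ (x z : List α) (k : ℕ), IsLyndon x ∧ 1 ≤ k ∧ z <+: x ∧
      z.length < x.length ∧ y.take n = wpow x k ++ z ∧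
      IsPeriod (y.take n) x.length ∧ (∀ q, IsPeriod (y.take n) q → x.length ≤ q) := by
  intro n
  induction n with
  | zero => omega
  | succ n ih =>
    intro _ hn1
    rcases Nat.eq_zero_or_pos n with rfl | hn0
    · -- base case : take 1
      have hl1 : (y.take 1).length = 1 := by rw [List.length_take]; omega
      refine ⟨y.take 1, [], 1, ?_, le_refl 1, List.nil_prefix, ?_, by simp [wpow], ?_, ?_⟩
      · constructor
        · intro h
          have := congrArg List.length h
          rw [hl1] at this
          simp at this
        · intro v hv0 hv1 hsuf
          exfalso
          apply hv1
          apply hsuf.eq_of_length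
          have h1 := hsuf.length_le
          have h2 : 0 < v.length := List.length_pos_iff.2 hv0
          omega
      · simp [hl1]
      · exact ⟨by omega, fun i hi => by rw [hl1] at hi; omega⟩
      · intro q hq
        have h1 := hq.1
        omega
    · -- inductive step
      obtain ⟨x, z, k, hx, hk, hz, hzl, hw, hper, hmin⟩ := ih hn0 (by omega)
      have hx0 : 0 < x.length := lyndon_ne_nil hx
      have hny : n < y.length := by omega
      obtain ⟨hneq, hvals⟩ := y_vals hz hx0 (le_of_lt hny) hw
      have htake : y.take (n+1) = (wpow x k ++ z) ++ [y.getD n default] := by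
        rw [take_snoc hny, hw]
      rcases lt_trichotomy (y.getD n default) (x.getD z.length default) with hlt | heq | hgt
      · exact absurd (suffix_contra hy hz hx0 hk hzl hny hw hlt) (by simp)
      · -- same letter : extend z or bump k
        have hperw : IsPeriod (y.take (n+1)) x.length :=
          period_extend hz hx0 hk hzl hny hw heq
        have hminw : ∀ q, IsPeriod (y.take (n+1)) q → x.length ≤ q := by
          intro q hq
          apply hmin
          have : y.take n = (y.take (n+1)).take n := by
            rw [List.take_take]
            congr 1
            omega
          rw [this]
          exact period_take hq
        have hsnoc : z ++ [x.getD z.length default] <+: x := prefix_snoc hz hzl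
        rcases lt_or_ge (z.length + 1) x.length with hcase | hcase
        · refine ⟨x, z ++ [y.getD n default], k, hx, hk, ?_, ?_, ?_, hperw, hminw⟩
          · rw [heq]; exact hsnoc
          · rw [List.length_append, List.length_singleton]; omega
          · rw [htake, List.append_assoc]
        · have hxz : z ++ [y.getD n default] = x := by
            rw [heq]
            apply hsnoc.eq_of_length
            rw [List.length_append, List.length_singleton]
            have := hsnoc.length_le
            rw [List.length_append, List.length_singleton] at this
            omega
          refine ⟨x, [], k + 1, hx, by omega, List.nil_prefix, by simpa using hx0, ?_, hperw, hminw⟩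
          rw [htake, List.append_assoc, hxz, List.append_nil, ← wpow_succ']
      · -- bigger letter : whole prefix is Lyndon
        have hlyn : IsLyndon (y.take (n+1)) := by
          rw [htake]
          exact lyndon_ext hx hz hzl hgt hk
        have hlen1 : (y.take (n+1)).length = n + 1 := by
          rw [List.length_take]; omega
        refine ⟨y.take (n+1), [], 1, hlyn, le_refl 1, List.nil_prefix, by simp [hlen1], ?_, ?_, ?_⟩
        · simp [wpow]
        · exact ⟨by omega, fun i hi => by rw [hlen1] at hi; omega⟩
        · intro q hq
          by_contra h
          push_neg at h
          exact lyndon_no_small_period hlyn hq (by omega)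

end Duval

/-- Every Lyndon word `y` with `|y| > 1` can be written `y = x^k z b` where
`x` is a Lyndon word whose length is the (smallest) period of `x^k z`,
`k ≥ 1`, `z a` is a prefix of `x` for some letter `a < b`. -/
theorem lyndon_duval_decomposition {α : Type*} [LinearOrder α] [Inhabited α]
    (y : List α) (hy : IsLyndon y) (hlen : 1 < y.length) :
    ∃ (x z : List α) (k : ℕ) (a b : α),
      IsLyndon x ∧ 1 ≤ k ∧ (z ++ [a]) <+: x ∧ a < b ∧
      y = wpow x k ++ z ++ [b] ∧
      IsPeriod (wpow x k ++ z) x.length ∧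
      (∀ p : ℕ, IsPeriod (wpow x k ++ z) p → x.length ≤ p) := by
  obtain ⟨N, hNdef⟩ : ∃ N, N = y.length - 1 := ⟨_, rfl⟩
  have hN1 : 1 ≤ N := by omega
  have hN : N < y.length := by omega
  obtain ⟨x, z, k, hx, hk, hz, hzl, hw, hper, hmin⟩ := Duval.prefix_decomp hy N hN1 hN
  have hx0 : 0 < x.length := Duval.lyndon_ne_nil hx
  obtain ⟨hneq, hvals⟩ := Duval.y_vals hz hx0 hN.le hw
  have htk : y.take (N+1) = y := List.take_of_length_le (by omega)
  have hyeq : y = wpow x k ++ z ++ [y.getD N default] := by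
    conv_lhs => rw [← htk, Duval.take_snoc hN, hw]
  have hab : x.getD z.length default < y.getD N default := by
    rcases lt_trichotomy (y.getD N default) (x.getD z.length default) with h | h | h
    · exact (Duval.suffix_contra hy hz hx0 hk hzl hN hw h).elim
    · exfalso
      have hp : IsPeriod y x.length := by
        rw [← htk]
        exact Duval.period_extend hz hx0 hk hzl hN hw h
      have hkp : x.length ≤ k * x.length := by
        have := Nat.mul_le_mul_right x.length hk
        omega
      exact Duval.lyndon_no_small_period hy hp (by omega)
    · exact h
  refine ⟨x, z, k, x.getD z.length default, y.getD N default, hx, hk,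
    Duval.prefix_snoc hz hzl, hab, hyeq, ?_, ?_⟩
  · rw [← hw]; exact hper
  · rw [← hw]; exact hmin
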